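/- (Stewart's perturbation bound for projections) Let B, C ∈ ℂ^{p×q} with rank(B) = rank(C). Then ‖Π⊥_B − Π⊥_C‖ ≤ min(‖B⁺‖, ‖C⁺‖) · ‖B − C‖, where Π⊥_B denotes the orthogonal projection onto the orthogonal complement of the range of B, B⁺ is the Moore–Penrose pseudoinverse, and ‖·‖ is the spectral norm. -/

import Mathlib

set_option maxHeartbeats 1000000

open Matrix

/-- The spectral norm (largest singular value) of a complex matrix, as the operator
norm of the induced map between Euclidean spaces. -/
noncomputable def specNorm {p q : ℕ} (M : Matrix (Fin p) (Fin q) ℂ) : ℝ :=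
  ‖LinearMap.toContinuousLinearMap (Matrix.toEuclideanLin M)‖

open ContinuousLinearMap Module

noncomputable section StewartAux



variable {E : Type*} [NormedAddCommGroup E] [InnerProductSpace ℂ E]

local notation "⟪" x ", " y "⟫" => @inner ℂ _ _ x y

private lemma sq_le_imp_le {a b : ℝ} (ha : 0 ≤ a) (hb : 0 ≤ b) (h : a^2 ≤ b^2) : a ≤ b := by
  nlinarith

private lemma inner_move [CompleteSpace E] {P : E →L[ℂ] E} (hP : IsSelfAdjoint P) (x y : E) :
    ⟪P x, y⟫ = ⟪x, P y⟫ := by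
  conv_lhs => rw [← hP.adjoint_eq]
  exact ContinuousLinearMap.adjoint_inner_left P y x

private lemma proj_pyth [CompleteSpace E] {Q : E →L[ℂ] E} (hQ : IsSelfAdjoint Q)
    (hQ2 : Q * Q = Q) (x : E) :
    ‖Q x‖^2 + ‖x - Q x‖^2 = ‖x‖^2 := by
  have hQQ : Q (Q x) = Q x := by
    have := DFunLike.congr_fun hQ2 x
    rwa [ContinuousLinearMap.mul_apply] at this
  have e1 : ⟪Q x, x⟫ = ⟪x, Q x⟫ := inner_move hQ x x
  have e2 : ⟪Q x, Q x⟫ = ⟪x, Q x⟫ := by rw [inner_move hQ x (Q x), hQQ]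
  have horth : ⟪Q x, x - Q x⟫ = 0 := by
    rw [inner_sub_right, e1, e2, sub_self]
  have h := @norm_add_sq ℂ _ _ _ _ (Q x) (x - Q x)
  simp only [horth, map_zero, mul_zero, add_zero, zero_mul] at h
  rw [add_sub_cancel] at h
  linarith

private lemma maxbnd [CompleteSpace E] (P Q : E →L[ℂ] E)
    (hP : IsSelfAdjoint P) (hP2 : P * P = P)
    (hQ : IsSelfAdjoint Q) (hQ2 : Q * Q = Q) :
    ‖P - Q‖ ≤ max ‖(1 - Q) * P‖ ‖(1 - P) * Q‖ := by
  set a := ‖(1 - Q) * P‖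
  set b := ‖(1 - P) * Q‖
  set M := max a b with hM
  have hM0 : (0:ℝ) ≤ M := le_max_of_le_left (norm_nonneg _)
  apply opNorm_le_bound _ hM0
  intro x
  have hQx : Q (Q x) = Q x := by
    have := DFunLike.congr_fun hQ2 x
    rwa [ContinuousLinearMap.mul_apply] at this
  have hQP : Q (Q (P x)) = Q (P x) := by
    have := DFunLike.congr_fun hQ2 (P x)
    rwa [ContinuousLinearMap.mul_apply] at this
  have hPP : P (P x) = P x := by
    have := DFunLike.congr_fun hP2 x
    rwa [ContinuousLinearMap.mul_apply] at this
  set u : E := P x - Q (P x) with hu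
  set v : E := Q x - Q (P x) with hv
  have hdec : (P - Q) x = u - v := by
    rw [ContinuousLinearMap.sub_apply, hu, hv]
    abel
  have horth : ⟪u, v⟫ = 0 := by
    have e1 : ⟪Q (P x), Q x⟫ = ⟪P x, Q x⟫ := by rw [inner_move hQ, hQx]
    have e2 : ⟪Q (P x), Q (P x)⟫ = ⟪P x, Q (P x)⟫ := by rw [inner_move hQ, hQP]
    rw [hu, hv, inner_sub_left, inner_sub_right, inner_sub_right, e1, e2]
    ring
  have hpyth : ‖u - v‖^2 = ‖u‖^2 + ‖v‖^2 := by
    have h := @norm_sub_sq ℂ _ _ _ _ u v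
    simp only [horth, map_zero, mul_zero, sub_zero, zero_mul] at h
    linarith
  have hub : ‖u‖ ≤ a * ‖P x‖ := by
    have : u = ((1 - Q) * P) (P x) := by
      simp only [ContinuousLinearMap.mul_apply, ContinuousLinearMap.sub_apply,
        ContinuousLinearMap.one_apply, hPP, hu]
    rw [this]
    exact le_opNorm _ _
  have hvb : ‖v‖ ≤ b * ‖x - P x‖ := by
    have key : Q * (1 - P) = star ((1 - P) * Q) := by
      rw [StarMul.star_mul, hQ.star_eq, ((IsSelfAdjoint.one _).sub hP).star_eq]
    have hnorm : ‖Q * (1 - P)‖ = b := by rw [key, norm_star]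
    have h0 : P (x - P x) = 0 := by rw [map_sub, hPP, sub_self]
    have : v = (Q * (1 - P)) (x - P x) := by
      simp only [ContinuousLinearMap.mul_apply, ContinuousLinearMap.sub_apply,
        ContinuousLinearMap.one_apply, h0, sub_zero, map_sub, hv, hPP]
      abel
    rw [this, ← hnorm]
    exact le_opNorm _ _
  have hx : ‖P x‖^2 + ‖x - P x‖^2 = ‖x‖^2 := proj_pyth hP hP2 x
  apply sq_le_imp_le (norm_nonneg _) (by positivity)
  rw [hdec, hpyth]
  have ha : a ≤ M := le_max_left _ _
  have hb : b ≤ M := le_max_right _ _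
  have h1 : ‖u‖^2 ≤ (M * ‖P x‖)^2 :=
    pow_le_pow_left₀ (norm_nonneg u)
      (hub.trans (mul_le_mul_of_nonneg_right ha (norm_nonneg _))) 2
  have h2 : ‖v‖^2 ≤ (M * ‖x - P x‖)^2 :=
    pow_le_pow_left₀ (norm_nonneg v)
      (hvb.trans (mul_le_mul_of_nonneg_right hb (norm_nonneg _))) 2
  have h3 : M^2 * ‖P x‖^2 + M^2 * ‖x - P x‖^2 = M^2 * ‖x‖^2 := by
    rw [← mul_add, hx]
  nlinarith [h1, h2, h3]





private lemma inner_move' [CompleteSpace E] {P : E →L[ℂ] E} (hP : IsSelfAdjoint P) (x y : E) :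
    ⟪P x, y⟫ = ⟪x, P y⟫ := by
  conv_lhs => rw [← hP.adjoint_eq]
  exact ContinuousLinearMap.adjoint_inner_left P y x

private lemma proj_pyth' [CompleteSpace E] {Q : E →L[ℂ] E} (hQ : IsSelfAdjoint Q)
    (hQ2 : Q * Q = Q) (x : E) :
    ‖Q x‖^2 + ‖x - Q x‖^2 = ‖x‖^2 := by
  have hQQ : Q (Q x) = Q x := by
    have := DFunLike.congr_fun hQ2 x
    rwa [ContinuousLinearMap.mul_apply] at this
  have e1 : ⟪Q x, x⟫ = ⟪x, Q x⟫ := inner_move' hQ x x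
  have e2 : ⟪Q x, Q x⟫ = ⟪x, Q x⟫ := by rw [inner_move' hQ x (Q x), hQQ]
  have horth : ⟪Q x, x - Q x⟫ = 0 := by
    rw [inner_sub_right, e1, e2, sub_self]
  have h := @norm_add_sq ℂ _ _ _ _ (Q x) (x - Q x)
  simp only [horth, map_zero, mul_zero, add_zero, zero_mul] at h
  rw [add_sub_cancel] at h
  linarith

private lemma sq_le_imp_le' {a b : ℝ} (hb : 0 ≤ b) (h : a^2 ≤ b^2) (ha : 0 ≤ a) : a ≤ b := by
  nlinarith

private lemma key_le [FiniteDimensional ℂ E] (P Q : E →L[ℂ] E)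
    (hP : IsSelfAdjoint P) (hP2 : P * P = P)
    (hQ : IsSelfAdjoint Q) (hQ2 : Q * Q = Q)
    (hrank : finrank ℂ (LinearMap.range (P : E →ₗ[ℂ] E)) = finrank ℂ (LinearMap.range (Q : E →ₗ[ℂ] E))) :
    ‖(1 - Q) * P‖ ≤ ‖(1 - P) * Q‖ := by
  set U : Submodule ℂ E := LinearMap.range (P : E →ₗ[ℂ] E) with hU
  set V : Submodule ℂ E := LinearMap.range (Q : E →ₗ[ℂ] E) with hV
  have fixU : ∀ x : E, x ∈ U → P x = x := by
    rintro x ⟨y, rfl⟩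
    have := DFunLike.congr_fun hP2 y
    rwa [ContinuousLinearMap.mul_apply] at this
  have fixV : ∀ x : E, x ∈ V → Q x = x := by
    rintro x ⟨y, rfl⟩
    have := DFunLike.congr_fun hQ2 y
    rwa [ContinuousLinearMap.mul_apply] at this
  have normP_le : ∀ x : E, ‖P x‖ ≤ ‖x‖ := fun x => by
    have h := proj_pyth' hP hP2 x
    exact sq_le_imp_le' (norm_nonneg _) (by nlinarith [sq_nonneg ‖x - P x‖]) (norm_nonneg _)
  rcases Nat.eq_zero_or_pos (finrank ℂ U) with h0 | hpos
  · -- U = ⊥, so P = 0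
    have hUbot : U = ⊥ := Submodule.finrank_eq_zero.mp h0
    have hP0 : (1 - Q) * P = 0 := by
      ext x
      have : P x ∈ U := LinearMap.mem_range_self (P : E →ₗ[ℂ] E) x
      rw [hUbot, Submodule.mem_bot] at this
      simp [ContinuousLinearMap.mul_apply, this]
    rw [hP0, norm_zero]
    exact norm_nonneg _
  · haveI : Nontrivial U := Module.finrank_pos_iff.mp hpos
    haveI : ProperSpace U := FiniteDimensional.proper ℂ U
    -- the two restricted maps
    set T : U →L[ℂ] V :=
      ContinuousLinearMap.codRestrict (Q.comp U.subtypeL) V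
        (fun x => LinearMap.mem_range_self (Q : E →ₗ[ℂ] E) (x : E)) with hT
    set S : V →L[ℂ] U :=
      ContinuousLinearMap.codRestrict (P.comp V.subtypeL) U
        (fun x => LinearMap.mem_range_self (P : E →ₗ[ℂ] E) (x : E)) with hS
    have hTcoe : ∀ w : U, (T w : E) = Q w := fun w => rfl
    have hScoe : ∀ w : V, (S w : E) = P w := fun w => rfl
    have hSadj : S = ContinuousLinearMap.adjoint T := by
      rw [ContinuousLinearMap.eq_adjoint_iff]
      intro x y
      rw [Submodule.coe_inner, Submodule.coe_inner, hScoe, hTcoe]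
      rw [inner_move' hP, fixU _ y.2, ← inner_move' hQ, fixV _ x.2]
    -- minimize ‖T u‖ on the unit sphere of U
    obtain ⟨z, hz⟩ := exists_ne (0 : U)
    have hsph_ne : ((‖z‖⁻¹ : ℂ) • z) ∈ Metric.sphere (0 : U) 1 := by
      rw [mem_sphere_zero_iff_norm]
      exact norm_smul_inv_norm hz
    obtain ⟨u₀, hu₀s, hu₀min⟩ :=
      (isCompact_sphere (0 : U) 1).exists_isMinOn ⟨_, hsph_ne⟩
        ((continuous_norm.comp T.continuous).continuousOn)
    set c : ℝ := ‖T u₀‖ with hc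
    have hc0 : 0 ≤ c := norm_nonneg _
    have hnorm_u₀ : ‖u₀‖ = 1 := mem_sphere_zero_iff_norm.mp hu₀s
    have hu₀ne : u₀ ≠ 0 := by
      intro h
      rw [h, norm_zero] at hnorm_u₀
      norm_num at hnorm_u₀
    -- exhibit a unit vector in V with small image under S
    have hv : ∃ v : V, ‖v‖ = 1 ∧ ‖S v‖ ≤ c := by
      rcases eq_or_lt_of_le hc0 with hczero | hcpos
      · -- c = 0 : T is not injective, hence neither is S
        have hT0 : T u₀ = 0 := norm_eq_zero.mp hczero.symm
        have hTnotInj : ¬ Function.Injective T := fun hinj =>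
          hu₀ne (hinj (by rw [hT0, map_zero]))
        have hSnotInj : ¬ Function.Injective S := by
          intro hSinj
          have hSsurj : Function.Surjective S :=
            (LinearMap.injective_iff_surjective_of_finrank_eq_finrank hrank.symm).mp hSinj
          apply hTnotInj
          apply (injective_iff_map_eq_zero T).mpr
          intro x hx0
          obtain ⟨z, hz⟩ := hSsurj x
          have hxx : (inner ℂ x x : ℂ) = 0 := by
            calc (inner ℂ x x : ℂ) = inner ℂ x (S z) := by rw [hz]
              _ = inner ℂ x (ContinuousLinearMap.adjoint T z) := by rw [hSadj]
              _ = inner ℂ (T x) z := ContinuousLinearMap.adjoint_inner_right T x z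
              _ = 0 := by rw [hx0, inner_zero_left]
          exact inner_self_eq_zero.mp hxx
        have hker : ∃ x : V, S x = 0 ∧ x ≠ 0 := by
          by_contra hcon
          push_neg at hcon
          exact hSnotInj ((injective_iff_map_eq_zero S).mpr fun a ha => hcon a ha)
        obtain ⟨x, hx0, hxne⟩ := hker
        refine ⟨(‖x‖⁻¹ : ℂ) • x, norm_smul_inv_norm hxne, ?_⟩
        rw [_root_.map_smul, hx0, smul_zero, norm_zero]
        exact hc0
      · -- c > 0 : use Rayleigh quotient minimization
        set A : U →L[ℂ] U := (ContinuousLinearMap.adjoint T) ∘L T with hA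
        have hAsa : IsSelfAdjoint A := by
          rw [ContinuousLinearMap.isSelfAdjoint_iff']
          rw [hA, ContinuousLinearMap.adjoint_comp, ContinuousLinearMap.adjoint_adjoint]
        have hre : ∀ w : U, A.reApplyInnerSelf w = ‖T w‖^2 := by
          intro w
          rw [ContinuousLinearMap.reApplyInnerSelf_apply]
          have h1 : (inner ℂ (A w) w : ℂ) = inner ℂ (T w) (T w) :=
            ContinuousLinearMap.adjoint_inner_left T w (T w)
          rw [h1, inner_self_eq_norm_sq]
        have hmin : IsMinOn A.reApplyInnerSelf (Metric.sphere (0 : U) ‖u₀‖) u₀ := by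
          rw [hnorm_u₀, isMinOn_iff]
          intro x hx
          rw [hre, hre]
          exact pow_le_pow_left₀ hc0 (hu₀min hx) 2
        have hev := hAsa.hasEigenvector_of_isMinOn hu₀ne hmin
        have hAu₀ : A u₀ = (((⨅ x : { x : U // x ≠ 0 }, A.rayleighQuotient x : ℝ) : ℂ)) • u₀ :=
          hev.apply_eq_smul
        set μ : ℝ := ⨅ x : { x : U // x ≠ 0 }, A.rayleighQuotient x with hμ
        have h2 : (inner ℂ (A u₀) u₀ : ℂ) = (μ : ℂ) := by
          rw [hAu₀, inner_smul_left, Complex.conj_ofReal, inner_self_eq_norm_sq_to_K,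
            hnorm_u₀]
          norm_num
        have h1 : (inner ℂ (A u₀) u₀ : ℂ) = ((c^2 : ℝ) : ℂ) := by
          have := ContinuousLinearMap.adjoint_inner_left T u₀ (T u₀)
          rw [hA, ContinuousLinearMap.comp_apply, this, inner_self_eq_norm_sq_to_K, ← hc]
          norm_num
        have hμc : μ = c^2 := by
          have := h2.symm.trans h1
          exact_mod_cast this
        refine ⟨(c⁻¹ : ℂ) • T u₀, ?_, ?_⟩
        · rw [norm_smul]
          simp only [norm_inv, Complex.norm_real, Real.norm_eq_abs,
            abs_of_nonneg hc0, ← hc]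
          field_simp
        · rw [_root_.map_smul, hSadj]
          have hSTu : ContinuousLinearMap.adjoint T (T u₀) = ((c^2 : ℝ) : ℂ) • u₀ := by
            rw [← hμc]
            exact hAu₀
          rw [hSTu, smul_smul]
          have hcne : (c : ℂ) ≠ 0 := Complex.ofReal_ne_zero.mpr (ne_of_gt hcpos)
          have hmul : ((c : ℂ))⁻¹ * ((c^2 : ℝ) : ℂ) = (c : ℂ) := by
            push_cast
            rw [sq, ← mul_assoc, inv_mul_cancel₀ hcne, one_mul]
          rw [hmul, norm_smul]
          simp only [Complex.norm_real, Real.norm_eq_abs, abs_of_nonneg hc0, hnorm_u₀,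
            mul_one, le_refl]
    obtain ⟨v, hv1, hvc⟩ := hv
    have hQv : Q (v : E) = v := fixV _ v.2
    have hvE : ‖(v : E)‖ = 1 := by rw [Submodule.coe_norm] at hv1; exact hv1
    have hPv : ‖P (v : E)‖ ≤ c := by
      have h' := hvc
      rw [Submodule.coe_norm, hScoe] at h'
      exact h'
    have hrhs : Real.sqrt (1 - c^2) ≤ ‖(1 - P) * Q‖ := by
      have happ : ((1 - P) * Q) (v : E) = (v : E) - P v := by
        simp only [ContinuousLinearMap.mul_apply, ContinuousLinearMap.sub_apply,
          ContinuousLinearMap.one_apply, hQv]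
      have hnorm2 : ‖(v : E) - P v‖^2 = 1 - ‖P (v : E)‖^2 := by
        have h5 := proj_pyth' hP hP2 (v : E)
        rw [hvE] at h5
        linear_combination h5
      calc Real.sqrt (1 - c^2) ≤ Real.sqrt (1 - ‖P (v : E)‖^2) := by
            apply Real.sqrt_le_sqrt
            have : ‖P (v : E)‖^2 ≤ c^2 := pow_le_pow_left₀ (norm_nonneg _) hPv 2
            linarith
        _ = ‖(v : E) - P v‖ := by rw [← hnorm2, Real.sqrt_sq (norm_nonneg _)]
        _ = ‖((1 - P) * Q) (v : E)‖ := by rw [happ]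
        _ ≤ ‖(1 - P) * Q‖ * ‖(v : E)‖ := le_opNorm _ _
        _ = ‖(1 - P) * Q‖ := by rw [hvE, mul_one]
    have hlhs : ‖(1 - Q) * P‖ ≤ Real.sqrt (1 - c^2) := by
      apply opNorm_le_bound _ (Real.sqrt_nonneg _)
      intro x
      rcases eq_or_ne (P x) 0 with h | h
      · simp only [ContinuousLinearMap.mul_apply, h, map_zero, norm_zero]
        positivity
      · set w : E := P x with hw
        have hwU : w ∈ U := LinearMap.mem_range_self (P : E →ₗ[ℂ] E) x
        set u : E := (‖w‖⁻¹ : ℂ) • w with hudef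
        have hu_norm : ‖u‖ = 1 := norm_smul_inv_norm h
        have huU : u ∈ U := U.smul_mem _ hwU
        have hTu : c ≤ ‖Q u‖ := by
          have hmem : (⟨u, huU⟩ : U) ∈ Metric.sphere (0 : U) 1 := by
            rw [mem_sphere_zero_iff_norm]
            exact hu_norm
          have := hu₀min hmem
          rw [hc]
          simpa [hTcoe] using this
        have hQu : ‖u - Q u‖^2 = 1 - ‖Q u‖^2 := by
          have h5 := proj_pyth' hQ hQ2 u
          rw [hu_norm] at h5
          linear_combination h5
        have hwne : (‖w‖ : ℂ) ≠ 0 := by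
          simpa using norm_ne_zero_iff.mpr h
        have hsmul : ((1 - Q) * P) x = (‖w‖ : ℂ) • (u - Q u) := by
          have hwu : (‖w‖ : ℂ) • u = w := by
            rw [hudef, smul_smul, mul_inv_cancel₀ hwne, one_smul]
          rw [smul_sub, ← _root_.map_smul, hwu]
          simp only [ContinuousLinearMap.mul_apply, ContinuousLinearMap.sub_apply,
            ContinuousLinearMap.one_apply, ← hw]
        calc ‖((1 - Q) * P) x‖ = ‖w‖ * ‖u - Q u‖ := by
              rw [hsmul, norm_smul]
              simp [Complex.norm_real, abs_of_nonneg (norm_nonneg w)]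
          _ ≤ ‖x‖ * Real.sqrt (1 - c^2) := by
              apply mul_le_mul (normP_le x) ?_ (norm_nonneg _) (norm_nonneg _)
              rw [← Real.sqrt_sq (norm_nonneg (u - Q u)), hQu]
              apply Real.sqrt_le_sqrt
              have : c^2 ≤ ‖Q u‖^2 := pow_le_pow_left₀ hc0 hTu 2
              linarith
          _ = Real.sqrt (1 - c^2) * ‖x‖ := mul_comm _ _
    exact hlhs.trans hrhs


open scoped Matrix.Norms.L2Operator

private lemma specNorm_eq' {p q : ℕ} (M : Matrix (Fin p) (Fin q) ℂ) : specNorm M = ‖M‖ := rfl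

private lemma norm_proj_le_one {n : ℕ} {e : Matrix (Fin n) (Fin n) ℂ}
    (he : eᴴ = e) (he2 : e * e = e) : ‖e‖ ≤ 1 := by
  have h := Matrix.l2_opNorm_conjTranspose_mul_self e
  rw [he, he2] at h
  nlinarith [norm_nonneg e]

private lemma rank_eq_finrank_clm {p : ℕ} (P : Matrix (Fin p) (Fin p) ℂ) :
    Matrix.rank P =
      finrank ℂ (LinearMap.range (((Matrix.toEuclideanCLM (𝕜 := ℂ) (n := Fin p)) P : EuclideanSpace ℂ (Fin p) →ₗ[ℂ] EuclideanSpace ℂ (Fin p)))) := by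
  have h1 : Matrix.rank P = finrank ℂ (LinearMap.range (Matrix.toEuclideanLin P)) := by
    rw [Matrix.toEuclideanLin_eq_toLin]
    exact Matrix.rank_eq_finrank_range_toLin P _ _
  rw [h1]
  congr 1

end StewartAux

/-- Stewart's perturbation bound: if `rank B = rank C` then
`‖Π⊥_B − Π⊥_C‖ ≤ min(‖B⁺‖, ‖C⁺‖) ‖B − C‖`, where `Π⊥_B = I − BB⁺` and `B⁺` is the
Moore–Penrose pseudoinverse (specified via the four Penrose conditions). -/
theorem stmt7 (p q : ℕ) (B C : Matrix (Fin p) (Fin q) ℂ)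
    (Bp Cp : Matrix (Fin q) (Fin p) ℂ)
    (hB1 : B * Bp * B = B) (hB2 : Bp * B * Bp = Bp)
    (hB3 : (B * Bp)ᴴ = B * Bp) (hB4 : (Bp * B)ᴴ = Bp * B)
    (hC1 : C * Cp * C = C) (hC2 : Cp * C * Cp = Cp)
    (hC3 : (C * Cp)ᴴ = C * Cp) (hC4 : (Cp * C)ᴴ = Cp * C)
    (hrank : B.rank = C.rank) :
    specNorm ((1 - B * Bp) - (1 - C * Cp)) ≤
      min (specNorm Bp) (specNorm Cp) * specNorm (B - C) := by
  classical
  open scoped Matrix.Norms.L2Operator in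
  have hrankBP : (B * Bp).rank = B.rank := by
    apply le_antisymm (Matrix.rank_mul_le_left B Bp)
    conv_lhs => rw [← hB1]
    exact Matrix.rank_mul_le_left (B * Bp) B
  have hrankCQ : (C * Cp).rank = C.rank := by
    apply le_antisymm (Matrix.rank_mul_le_left C Cp)
    conv_lhs => rw [← hC1]
    exact Matrix.rank_mul_le_left (C * Cp) C
  simp only [specNorm_eq']
  have hL : (1 - B * Bp) - (1 - C * Cp) = (C * Cp) - (B * Bp) := by abel
  rw [hL, norm_sub_rev]
  have hPidem : (B * Bp) * (B * Bp) = B * Bp := by rw [← Matrix.mul_assoc, hB1]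
  have hQidem : (C * Cp) * (C * Cp) = C * Cp := by rw [← Matrix.mul_assoc, hC1]
  have h1Q : (1 - C * Cp)ᴴ = 1 - C * Cp := by
    rw [conjTranspose_sub, conjTranspose_one, hC3]
  have h1P : (1 - B * Bp)ᴴ = 1 - B * Bp := by
    rw [conjTranspose_sub, conjTranspose_one, hB3]
  have h1Qidem : (1 - C * Cp) * (1 - C * Cp) = 1 - C * Cp := by
    rw [sub_mul, one_mul, mul_sub, mul_one, hQidem]
    abel
  have h1Pidem : (1 - B * Bp) * (1 - B * Bp) = 1 - B * Bp := by
    rw [sub_mul, one_mul, mul_sub, mul_one, hPidem]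
    abel
  have hQC : (1 - C * Cp) * C = 0 := by
    rw [Matrix.sub_mul, Matrix.one_mul, hC1, sub_self]
  have hPB : (1 - B * Bp) * B = 0 := by
    rw [Matrix.sub_mul, Matrix.one_mul, hB1, sub_self]
  have ha : ‖(1 - C * Cp) * (B * Bp)‖ ≤ ‖Bp‖ * ‖B - C‖ := by
    have e1 : (1 - C * Cp) * (B * Bp) = ((1 - C * Cp) * (B - C)) * Bp := by
      rw [Matrix.mul_sub, hQC, sub_zero, ← Matrix.mul_assoc]
    rw [e1]
    calc ‖((1 - C * Cp) * (B - C)) * Bp‖ ≤ ‖(1 - C * Cp) * (B - C)‖ * ‖Bp‖ :=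
          Matrix.l2_opNorm_mul _ _
      _ ≤ (‖(1 - C * Cp)‖ * ‖B - C‖) * ‖Bp‖ :=
          mul_le_mul_of_nonneg_right (Matrix.l2_opNorm_mul _ _) (norm_nonneg _)
      _ ≤ (1 * ‖B - C‖) * ‖Bp‖ :=
          mul_le_mul_of_nonneg_right
            (mul_le_mul_of_nonneg_right (norm_proj_le_one h1Q h1Qidem) (norm_nonneg _))
            (norm_nonneg _)
      _ = ‖Bp‖ * ‖B - C‖ := by ring
  have hb : ‖(1 - B * Bp) * (C * Cp)‖ ≤ ‖Cp‖ * ‖B - C‖ := by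
    have e1 : (1 - B * Bp) * (C * Cp) = ((1 - B * Bp) * (C - B)) * Cp := by
      rw [Matrix.mul_sub, hPB, sub_zero, ← Matrix.mul_assoc]
    rw [e1]
    calc ‖((1 - B * Bp) * (C - B)) * Cp‖ ≤ ‖(1 - B * Bp) * (C - B)‖ * ‖Cp‖ :=
          Matrix.l2_opNorm_mul _ _
      _ ≤ (‖(1 - B * Bp)‖ * ‖C - B‖) * ‖Cp‖ :=
          mul_le_mul_of_nonneg_right (Matrix.l2_opNorm_mul _ _) (norm_nonneg _)
      _ ≤ (1 * ‖C - B‖) * ‖Cp‖ :=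
          mul_le_mul_of_nonneg_right
            (mul_le_mul_of_nonneg_right (norm_proj_le_one h1P h1Pidem) (norm_nonneg _))
            (norm_nonneg _)
      _ = ‖Cp‖ * ‖B - C‖ := by rw [norm_sub_rev]; ring
  -- move to continuous linear maps on Euclidean space
  set φ := Matrix.toEuclideanCLM (𝕜 := ℂ) (n := Fin p) with hφ
  have hPsa : IsSelfAdjoint (φ (B * Bp)) := by
    show star (φ (B * Bp)) = φ (B * Bp)
    rw [← map_star]
    congr 1
  have hQsa : IsSelfAdjoint (φ (C * Cp)) := by
    show star (φ (C * Cp)) = φ (C * Cp)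
    rw [← map_star]
    congr 1
  have hPidem' : φ (B * Bp) * φ (B * Bp) = φ (B * Bp) := by rw [← _root_.map_mul, hPidem]
  have hQidem' : φ (C * Cp) * φ (C * Cp) = φ (C * Cp) := by rw [← _root_.map_mul, hQidem]
  have hrank' : finrank ℂ (LinearMap.range (φ (B * Bp) : EuclideanSpace ℂ (Fin p) →ₗ[ℂ] EuclideanSpace ℂ (Fin p)))
      = finrank ℂ (LinearMap.range (φ (C * Cp) : EuclideanSpace ℂ (Fin p) →ₗ[ℂ] EuclideanSpace ℂ (Fin p))) := by
    rw [hφ, ← rank_eq_finrank_clm, ← rank_eq_finrank_clm, hrankBP, hrankCQ, hrank]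
  have hkey : ‖(1 - φ (C * Cp)) * φ (B * Bp)‖ = ‖(1 - φ (B * Bp)) * φ (C * Cp)‖ :=
    le_antisymm
      (key_le (φ (B * Bp)) (φ (C * Cp)) hPsa hPidem' hQsa hQidem' hrank')
      (key_le (φ (C * Cp)) (φ (B * Bp)) hQsa hQidem' hPsa hPidem' hrank'.symm)
  have hmax := maxbnd (φ (B * Bp)) (φ (C * Cp)) hPsa hPidem' hQsa hQidem'
  have hnormPQ : ‖B * Bp - C * Cp‖ = ‖φ (B * Bp) - φ (C * Cp)‖ := by
    rw [Matrix.cstar_norm_def, _root_.map_sub]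
  have hnorma : ‖(1 - C * Cp) * (B * Bp)‖ = ‖(1 - φ (C * Cp)) * φ (B * Bp)‖ := by
    rw [Matrix.cstar_norm_def, _root_.map_mul, _root_.map_sub, _root_.map_one]
  have hnormb : ‖(1 - B * Bp) * (C * Cp)‖ = ‖(1 - φ (B * Bp)) * φ (C * Cp)‖ := by
    rw [Matrix.cstar_norm_def, _root_.map_mul, _root_.map_sub, _root_.map_one]
  have hfin : ‖B * Bp - C * Cp‖ ≤ min (‖Bp‖ * ‖B - C‖) (‖Cp‖ * ‖B - C‖) := by
    apply le_min
    · calc ‖B * Bp - C * Cp‖ = ‖φ (B * Bp) - φ (C * Cp)‖ := hnormPQ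
        _ ≤ max ‖(1 - φ (C * Cp)) * φ (B * Bp)‖ ‖(1 - φ (B * Bp)) * φ (C * Cp)‖ := hmax
        _ = ‖(1 - φ (C * Cp)) * φ (B * Bp)‖ := by rw [← hkey, max_self]
        _ = ‖(1 - C * Cp) * (B * Bp)‖ := hnorma.symm
        _ ≤ ‖Bp‖ * ‖B - C‖ := ha
    · calc ‖B * Bp - C * Cp‖ = ‖φ (B * Bp) - φ (C * Cp)‖ := hnormPQ
        _ ≤ max ‖(1 - φ (C * Cp)) * φ (B * Bp)‖ ‖(1 - φ (B * Bp)) * φ (C * Cp)‖ := hmax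
        _ = ‖(1 - φ (B * Bp)) * φ (C * Cp)‖ := by rw [hkey, max_self]
        _ = ‖(1 - B * Bp) * (C * Cp)‖ := hnormb.symm
        _ ≤ ‖Cp‖ * ‖B - C‖ := hb
  calc ‖B * Bp - C * Cp‖ ≤ min (‖Bp‖ * ‖B - C‖) (‖Cp‖ * ‖B - C‖) := hfin
    _ = min ‖Bp‖ ‖Cp‖ * ‖B - C‖ := (min_mul_of_nonneg _ _ (norm_nonneg _)).symm
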